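/- For all real λ ≥ 0, t ∈ ℝ and y ∈ (0, 1], one has |√(t + iy − λ)| / Im √(i − λ) ≤ 2^{3/4}·(1 + t²)^{1/4}. -/

import Mathlib

open Complex

/-- For all real `λ ≥ 0`, `t ∈ ℝ` and `y ∈ (0, 1]`, one has
`|√(t + iy − λ)| / Im √(i − λ) ≤ 2^{3/4} (1 + t²)^{1/4}`, where `√` denotes the principal
branch of the complex square root. -/
theorem stmt9 (l t y : ℝ) (hl : 0 ≤ l) (hy : y ∈ Set.Ioc (0 : ℝ) 1) :
    ‖((t : ℂ) + Complex.I * y - l) ^ ((1 : ℂ) / 2)‖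
        / ((Complex.I - (l : ℂ)) ^ ((1 : ℂ) / 2)).im
      ≤ (2 : ℝ) ^ ((3 : ℝ) / 4) * (1 + t ^ 2) ^ ((1 : ℝ) / 4) := by
  obtain ⟨hy0, hy1⟩ := hy
  set u : ℂ := Complex.I - (l : ℂ) with hu
  have hune : u ≠ 0 := by
    intro h
    have := congrArg Complex.im h
    simp [hu] at this
  set w : ℂ := u ^ ((1 : ℂ) / 2) with hwdef
  -- w^2 = u
  have hw2 : w ^ 2 = u := by
    have : ((1 : ℂ) / 2) = (((2 : ℕ) : ℂ))⁻¹ := by norm_num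
    rw [hwdef, this]
    exact Complex.cpow_nat_inv_pow u two_ne_zero
  have hre : w.re ^ 2 - w.im ^ 2 = -l := by
    have := congrArg Complex.re hw2
    simpa [hu, pow_two, Complex.mul_re] using this
  have him1 : 2 * w.re * w.im = 1 := by
    have := congrArg Complex.im hw2
    simp [hu, pow_two, Complex.mul_im] at this
    linarith
  -- |w|^2 = sqrt (1 + l^2)
  have habsu : ‖u‖ = Real.sqrt (1 + l ^ 2) := by
    rw [Complex.norm_def, Complex.normSq_apply]
    congr 1
    simp [hu]
    ring
  have habsw : w.re ^ 2 + w.im ^ 2 = Real.sqrt (1 + l ^ 2) := by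
    have h1 : ‖w‖ ^ 2 = ‖u‖ := by
      rw [← norm_pow, hw2]
    rw [← habsu, ← h1, Complex.sq_norm, Complex.normSq_apply]
    ring
  have hS1 : (1 : ℝ) ≤ Real.sqrt (1 + l ^ 2) := by
    have := Real.sqrt_le_sqrt (show (1:ℝ) ≤ 1 + l ^ 2 by nlinarith)
    simpa using this
  -- w.im > 0
  have hargpos : 0 < Complex.arg u := by
    rcases lt_or_eq_of_le (Complex.arg_nonneg_iff.mpr (by simp [hu] : (0:ℝ) ≤ u.im)) with h | h
    · exact h
    · exfalso
      have := Complex.arg_eq_zero_iff.mp h.symm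
      simp [hu] at this
  have hwim : 0 < w.im := by
    rw [hwdef, Complex.cpow_def_of_ne_zero hune]
    rw [Complex.exp_im]
    apply mul_pos (Real.exp_pos _)
    apply Real.sin_pos_of_pos_of_lt_pi
    · have : (Complex.log u * (1/2)).im = Complex.arg u / 2 := by
        simp [Complex.mul_im, Complex.log_im, Complex.log_re]
        ring
      rw [this]; positivity
    · have : (Complex.log u * (1/2)).im = Complex.arg u / 2 := by
        simp [Complex.mul_im, Complex.log_im, Complex.log_re]
        ring
      rw [this]
      have := Complex.arg_le_pi u
      have hpi : 0 < Real.pi := Real.pi_pos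
      linarith
  -- lower bound on w.im ^ 2
  have him2 : Real.sqrt (1 + l ^ 2) / 2 ≤ w.im ^ 2 := by nlinarith
  -- numerator
  set z : ℂ := (t : ℂ) + Complex.I * y - (l : ℂ) with hz
  have habsz : ‖z ^ ((1 : ℂ) / 2)‖ = ‖z‖ ^ ((1:ℝ)/2) := by
    have : ((1 : ℂ) / 2) = (((1:ℝ)/2 : ℝ) : ℂ) := by norm_num
    rw [this, Complex.norm_cpow_real]
  -- bound on |z|
  have hT1 : (1 : ℝ) ≤ Real.sqrt (1 + t ^ 2) := by
    have := Real.sqrt_le_sqrt (show (1:ℝ) ≤ 1 + t ^ 2 by nlinarith)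
    simpa using this
  have hzbound : ‖z‖ ≤ Real.sqrt 2 * Real.sqrt (1 + l ^ 2) * Real.sqrt (1 + t ^ 2) := by
    have hsq : ‖z‖ ^ 2 = (t - l) ^ 2 + y ^ 2 := by
      rw [Complex.sq_norm, Complex.normSq_apply]
      simp [hz]
      ring
    have hrhs : (Real.sqrt 2 * Real.sqrt (1 + l ^ 2) * Real.sqrt (1 + t ^ 2)) ^ 2
        = 2 * (1 + l ^ 2) * (1 + t ^ 2) := by
      rw [mul_pow, mul_pow, Real.sq_sqrt (by norm_num), Real.sq_sqrt (by positivity),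
        Real.sq_sqrt (by positivity)]
    have h2 : ‖z‖ ^ 2 ≤ (Real.sqrt 2 * Real.sqrt (1 + l ^ 2) * Real.sqrt (1 + t ^ 2)) ^ 2 := by
      rw [hsq, hrhs]; nlinarith [sq_nonneg (t + l), sq_nonneg (l * t), hy0, hy1]
    exact le_of_pow_le_pow_left₀ two_ne_zero (by positivity) h2
  -- now the main inequality
  rw [habsz]
  rw [div_le_iff₀ hwim]
  set a : ℝ := ‖z‖ with ha
  have ha0 : 0 ≤ a := norm_nonneg z
  have key : a ≤ w.im ^ 2 * (2 * Real.sqrt 2) * Real.sqrt (1 + t ^ 2) := by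
    have h1 : Real.sqrt 2 * Real.sqrt (1 + l ^ 2) * Real.sqrt (1 + t ^ 2)
        ≤ w.im ^ 2 * (2 * Real.sqrt 2) * Real.sqrt (1 + t ^ 2) := by
      have hs2 : (0:ℝ) < Real.sqrt 2 := by positivity
      have hT0 : (0:ℝ) ≤ Real.sqrt (1 + t ^ 2) := Real.sqrt_nonneg _
      nlinarith [mul_nonneg (mul_nonneg hs2.le hT0) (sub_nonneg.mpr him2)]
    exact hzbound.trans h1
  -- convert RHS
  have hrpow2 : ((2:ℝ) ^ ((3:ℝ)/4) * (1 + t ^ 2) ^ ((1:ℝ)/4) * w.im) ^ 2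
      = w.im ^ 2 * (2 * Real.sqrt 2) * Real.sqrt (1 + t ^ 2) := by
    have e1 : ((2:ℝ) ^ ((3:ℝ)/4)) ^ 2 = 2 * Real.sqrt 2 := by
      rw [← Real.rpow_natCast ((2:ℝ) ^ ((3:ℝ)/4)) 2, ← Real.rpow_mul (by norm_num)]
      rw [show ((3:ℝ)/4 * (2:ℕ) : ℝ) = 1 + 1/2 by push_cast; ring]
      rw [Real.rpow_add (by norm_num), Real.rpow_one, ← Real.sqrt_eq_rpow]
    have e2 : (((1:ℝ) + t ^ 2) ^ ((1:ℝ)/4)) ^ 2 = Real.sqrt (1 + t ^ 2) := by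
      rw [← Real.rpow_natCast ((1 + t ^ 2 : ℝ) ^ ((1:ℝ)/4)) 2, ← Real.rpow_mul (by positivity)]
      rw [show ((1:ℝ)/4 * (2:ℕ) : ℝ) = 1/2 by push_cast; ring]
      rw [← Real.sqrt_eq_rpow]
    calc ((2:ℝ) ^ ((3:ℝ)/4) * (1 + t ^ 2) ^ ((1:ℝ)/4) * w.im) ^ 2
        = ((2:ℝ) ^ ((3:ℝ)/4)) ^ 2 * (((1:ℝ) + t ^ 2) ^ ((1:ℝ)/4)) ^ 2 * w.im ^ 2 := by ring
      _ = _ := by rw [e1, e2]; ring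
  have hlpow : (a ^ ((1:ℝ)/2)) ^ 2 = a := by
    rw [← Real.rpow_natCast (a ^ ((1:ℝ)/2)) 2, ← Real.rpow_mul ha0]
    norm_num
  apply le_of_pow_le_pow_left₀ two_ne_zero
  · positivity
  · rw [hlpow, hrpow2]
    exact key
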